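/- Consider the scalar ODE x'(t) = (1/8)·(2π²)^{2/3}·x(t)^{−1/3}·(−3x(t)⁴ + x(t)² + 2) on (0, ∞). Note that −3x⁴ + x² + 2 = (1 − x²)(3x² + 2), so x ≡ 1 is the unique positive constant solution. For every initial value x(0) = ε with ε > 0, the maximal solution is defined on all of [0, ∞), remains in the interval between ε and 1 (inclusive), and satisfies x(t) → 1 as t → ∞. -/

import Mathlib

open Real Filter Set Topology
open scoped ENNReal

/-- The right-hand side of the scalar ODE obtained by restricting the normalized
spinor-flow system (case `aμ = -1`) to the curve of volume-one Berger metrics. -/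
noncomputable def f2 (x : ℝ) : ℝ :=
  (1/8) * (2 * π^2) ^ ((2:ℝ)/3) * x ^ (-(1:ℝ)/3) * (-3*x^4 + x^2 + 2)

/-- `x` is a solution of `x' = f2(x)` on `J`, with values in `(0, ∞)`. -/
def IsSolutionOn (x : ℝ → ℝ) (J : Set ℝ) : Prop :=
  ∀ t ∈ J, 0 < x t ∧ HasDerivAt x (f2 (x t)) t

/-- The interval `[0, T)` as a subset of `ℝ`, where `T ∈ (0,∞]`. -/
def domainUpTo (T : ℝ≥0∞) : Set ℝ := {t : ℝ | 0 ≤ t ∧ ENNReal.ofReal t < T}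

/-- `x` is a maximal solution on `[0, T)`: it is a solution there and cannot be
extended to a solution on a strictly larger interval to the right. -/
def IsMaxSolution (x : ℝ → ℝ) (T : ℝ≥0∞) : Prop :=
  0 < T ∧ IsSolutionOn x (domainUpTo T) ∧
    ¬ ∃ (T' : ℝ≥0∞) (x' : ℝ → ℝ), T < T' ∧ IsSolutionOn x' (domainUpTo T') ∧
        ∀ t ∈ domainUpTo T, x' t = x t




noncomputable def Kc : ℝ := (1/8) * (2 * π^2) ^ ((2:ℝ)/3)

lemma Kc_pos : 0 < Kc := by
  have : (0:ℝ) < 2 * π^2 := by positivity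
  unfold Kc; positivity

lemma f2_eq (x : ℝ) : f2 x = Kc * x ^ (-(1:ℝ)/3) * ((1 - x^2) * (3*x^2 + 2)) := by
  unfold f2 Kc; ring_nf

lemma f2_pos {x : ℝ} (h0 : 0 < x) (h1 : x < 1) : 0 < f2 x := by
  rw [f2_eq]
  have h2 : (0:ℝ) < x ^ (-(1:ℝ)/3) := Real.rpow_pos_of_pos h0 _
  have h3 : 0 < 1 - x^2 := by nlinarith
  have : (0:ℝ) < 3*x^2+2 := by positivity
  have := Kc_pos
  positivity

lemma f2_one : f2 1 = 0 := by rw [f2_eq]; simp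

lemma f2_nonneg {x : ℝ} (h0 : 0 < x) (h1 : x ≤ 1) : 0 ≤ f2 x := by
  rcases eq_or_lt_of_le h1 with h | h
  · rw [h, f2_one]
  · exact (f2_pos h0 h).le

lemma f2_neg {x : ℝ} (h1 : 1 < x) : f2 x < 0 := by
  rw [f2_eq]
  have h0 : (0:ℝ) < x := lt_trans one_pos h1
  have h2 : (0:ℝ) < x ^ (-(1:ℝ)/3) := Real.rpow_pos_of_pos h0 _
  have h3 : (0:ℝ) < x^2 - 1 := by nlinarith
  have h4 : (0:ℝ) < 3*x^2+2 := by positivity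
  have key : 0 < Kc * x ^ (-(1:ℝ)/3) * ((x^2 - 1) * (3*x^2 + 2)) := by
    have := Kc_pos; positivity
  nlinarith [key]

lemma f2_nonpos {x : ℝ} (h1 : 1 ≤ x) : f2 x ≤ 0 := by
  rcases eq_or_lt_of_le h1 with h | h
  · rw [← h, f2_one]
  · exact (f2_neg h).le

lemma f2_contDiffAt {x : ℝ} (hx : 0 < x) : ContDiffAt ℝ 1 f2 x := by
  have h1 : ContDiffAt ℝ 1 (fun y : ℝ => y ^ (-(1:ℝ)/3)) x :=
    Real.contDiffAt_rpow_const_of_ne (ne_of_gt hx)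
  have h2 : ContDiffAt ℝ 1 (fun y : ℝ => -3*y^4 + y^2 + 2) x := by
    fun_prop
  have := ((contDiffAt_const (c := (1/8) * (2 * π^2) ^ ((2:ℝ)/3))).mul h1).mul h2
  exact this

lemma f2_continuousAt {x : ℝ} (hx : 0 < x) : ContinuousAt f2 x :=
  (f2_contDiffAt hx).continuousAt


section Barrier

variable {x : ℝ → ℝ} {D : Set ℝ}

lemma sol_contOn (hsol : IsSolutionOn x D) {s : Set ℝ} (hs : s ⊆ D) :
    ContinuousOn x s := fun u hu =>
  ((hsol u (hs hu)).2.continuousAt).continuousWithinAt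

lemma sol_le_one (hnn : ∀ t ∈ D, 0 ≤ t) (hD : ∀ t ∈ D, Icc 0 t ⊆ D)
    (hsol : IsSolutionOn x D) (h0 : x 0 ≤ 1) : ∀ t ∈ D, x t ≤ 1 := by
  intro t0 ht0
  by_contra hgt
  push_neg at hgt
  have ht0nn : (0:ℝ) ≤ t0 := hnn _ ht0
  have hsub : Icc 0 t0 ⊆ D := hD _ ht0
  have hcont : ContinuousOn x (Icc 0 t0) := sol_contOn hsol hsub
  set S : Set ℝ := Icc 0 t0 ∩ x ⁻¹' Iic 1 with hS
  have hSc : IsClosed S :=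
    hcont.preimage_isClosed_of_isClosed isClosed_Icc isClosed_Iic
  have hS0 : (0:ℝ) ∈ S := ⟨⟨le_refl 0, ht0nn⟩, h0⟩
  have hSbdd : BddAbove S := ⟨t0, fun u hu => hu.1.2⟩
  set s := sSup S with hs_def
  have hsS : s ∈ S := hSc.csSup_mem ⟨0, hS0⟩ hSbdd
  have hsnn : (0:ℝ) ≤ s := hsS.1.1
  have hslt : s < t0 := lt_of_le_of_ne hsS.1.2 (by
    intro h
    have h2 : x s ≤ 1 := hsS.2
    rw [h] at h2
    linarith)
  have hgt' : ∀ u ∈ Ioc s t0, 1 < x u := by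
    intro u hu
    by_contra hle; push_neg at hle
    have huS : u ∈ S := ⟨⟨le_trans hsnn hu.1.le, hu.2⟩, hle⟩
    exact absurd (le_csSup hSbdd huS) (not_le.mpr hu.1)
  have hxs : x s = 1 := by
    refine le_antisymm hsS.2 ?_
    have hc : ContinuousAt x s := (hsol s (hsub hsS.1)).2.continuousAt
    have hev : ∀ᶠ u in 𝓝[>] s, 1 ≤ x u := by
      filter_upwards [Ioc_mem_nhdsGT_of_mem ⟨le_refl s, hslt⟩] with u hu
      exact (hgt' u hu).le
    exact ge_of_tendsto (hc.tendsto.mono_left nhdsWithin_le_nhds) hev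
  have hanti : AntitoneOn x (Icc s t0) := by
    apply antitoneOn_of_deriv_nonpos (convex_Icc s t0)
      (hcont.mono (Icc_subset_Icc hsnn le_rfl))
    · intro u hu
      rw [interior_Icc] at hu
      exact ((hsol u (hsub ⟨le_trans hsnn hu.1.le, hu.2.le⟩)).2).differentiableAt.differentiableWithinAt
    · intro u hu
      rw [interior_Icc] at hu
      rw [((hsol u (hsub ⟨le_trans hsnn hu.1.le, hu.2.le⟩)).2).deriv]
      exact f2_nonpos (hgt' u ⟨hu.1, hu.2.le⟩).le
  have : x t0 ≤ x s := hanti ⟨le_rfl, hslt.le⟩ ⟨hslt.le, le_rfl⟩ hslt.le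
  rw [hxs] at this
  exact absurd this (not_le.mpr hgt)

lemma sol_ge_one (hnn : ∀ t ∈ D, 0 ≤ t) (hD : ∀ t ∈ D, Icc 0 t ⊆ D)
    (hsol : IsSolutionOn x D) (h0 : 1 ≤ x 0) : ∀ t ∈ D, 1 ≤ x t := by
  intro t0 ht0
  by_contra hgt
  push_neg at hgt
  have ht0nn : (0:ℝ) ≤ t0 := hnn _ ht0
  have hsub : Icc 0 t0 ⊆ D := hD _ ht0
  have hcont : ContinuousOn x (Icc 0 t0) := sol_contOn hsol hsub
  set S : Set ℝ := Icc 0 t0 ∩ x ⁻¹' Ici 1 with hS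
  have hSc : IsClosed S :=
    hcont.preimage_isClosed_of_isClosed isClosed_Icc isClosed_Ici
  have hS0 : (0:ℝ) ∈ S := ⟨⟨le_refl 0, ht0nn⟩, h0⟩
  have hSbdd : BddAbove S := ⟨t0, fun u hu => hu.1.2⟩
  set s := sSup S with hs_def
  have hsS : s ∈ S := hSc.csSup_mem ⟨0, hS0⟩ hSbdd
  have hsnn : (0:ℝ) ≤ s := hsS.1.1
  have hslt : s < t0 := lt_of_le_of_ne hsS.1.2 (by
    intro h
    have h2 : (1:ℝ) ≤ x s := hsS.2
    rw [h] at h2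
    linarith)
  have hgt' : ∀ u ∈ Ioc s t0, x u < 1 := by
    intro u hu
    by_contra hle; push_neg at hle
    have huS : u ∈ S := ⟨⟨le_trans hsnn hu.1.le, hu.2⟩, hle⟩
    exact absurd (le_csSup hSbdd huS) (not_le.mpr hu.1)
  have hxs : x s = 1 := by
    refine le_antisymm ?_ hsS.2
    have hc : ContinuousAt x s := (hsol s (hsub hsS.1)).2.continuousAt
    have hev : ∀ᶠ u in 𝓝[>] s, x u ≤ 1 := by
      filter_upwards [Ioc_mem_nhdsGT_of_mem ⟨le_refl s, hslt⟩] with u hu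
      exact (hgt' u hu).le
    exact le_of_tendsto (hc.tendsto.mono_left nhdsWithin_le_nhds) hev
  have hmono : MonotoneOn x (Icc s t0) := by
    apply monotoneOn_of_deriv_nonneg (convex_Icc s t0)
      (hcont.mono (Icc_subset_Icc hsnn le_rfl))
    · intro u hu
      rw [interior_Icc] at hu
      exact ((hsol u (hsub ⟨le_trans hsnn hu.1.le, hu.2.le⟩)).2).differentiableAt.differentiableWithinAt
    · intro u hu
      rw [interior_Icc] at hu
      have huD : u ∈ D := hsub ⟨le_trans hsnn hu.1.le, hu.2.le⟩
      rw [((hsol u huD).2).deriv]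
      exact f2_nonneg (hsol u huD).1 (hgt' u ⟨hu.1, hu.2.le⟩).le
  have : x s ≤ x t0 := hmono ⟨le_rfl, hslt.le⟩ ⟨hslt.le, le_rfl⟩ hslt.le
  rw [hxs] at this
  exact absurd this (not_le.mpr hgt)

lemma sol_mono (hnn : ∀ t ∈ D, 0 ≤ t) (hD : ∀ t ∈ D, Icc 0 t ⊆ D)
    (hsol : IsSolutionOn x D) (h0 : x 0 ≤ 1) :
    ∀ s ∈ D, ∀ t ∈ D, s ≤ t → x s ≤ x t := by
  intro s hs t ht hst
  have hub := sol_le_one hnn hD hsol h0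
  have hsub : Icc 0 t ⊆ D := hD _ ht
  have hsub' : Icc s t ⊆ D := fun u hu => hsub ⟨le_trans (hnn s hs) hu.1, hu.2⟩
  have hmono : MonotoneOn x (Icc s t) := by
    apply monotoneOn_of_deriv_nonneg (convex_Icc s t) (sol_contOn hsol hsub')
    · intro u hu
      rw [interior_Icc] at hu
      exact ((hsol u (hsub' ⟨hu.1.le, hu.2.le⟩)).2).differentiableAt.differentiableWithinAt
    · intro u hu
      rw [interior_Icc] at hu
      have huD : u ∈ D := hsub' ⟨hu.1.le, hu.2.le⟩
      rw [((hsol u huD).2).deriv]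
      exact f2_nonneg (hsol u huD).1 (hub u huD)
  exact hmono ⟨le_rfl, hst⟩ ⟨hst, le_rfl⟩ hst

lemma sol_anti (hnn : ∀ t ∈ D, 0 ≤ t) (hD : ∀ t ∈ D, Icc 0 t ⊆ D)
    (hsol : IsSolutionOn x D) (h0 : 1 ≤ x 0) :
    ∀ s ∈ D, ∀ t ∈ D, s ≤ t → x t ≤ x s := by
  intro s hs t ht hst
  have hlb := sol_ge_one hnn hD hsol h0
  have hsub : Icc 0 t ⊆ D := hD _ ht
  have hsub' : Icc s t ⊆ D := fun u hu => hsub ⟨le_trans (hnn s hs) hu.1, hu.2⟩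
  have hanti : AntitoneOn x (Icc s t) := by
    apply antitoneOn_of_deriv_nonpos (convex_Icc s t) (sol_contOn hsol hsub')
    · intro u hu
      rw [interior_Icc] at hu
      exact ((hsol u (hsub' ⟨hu.1.le, hu.2.le⟩)).2).differentiableAt.differentiableWithinAt
    · intro u hu
      rw [interior_Icc] at hu
      have huD : u ∈ D := hsub' ⟨hu.1.le, hu.2.le⟩
      rw [((hsol u huD).2).deriv]
      exact f2_nonpos (hlb u huD)
  exact hanti ⟨le_rfl, hst⟩ ⟨hst, le_rfl⟩ hst

end Barrier

section Extend

lemma sol_extend {x : ℝ → ℝ} {T₀ L : ℝ} (hT₀ : 0 < T₀)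
    (hsol : IsSolutionOn x (Ico 0 T₀)) (hL : 0 < L)
    (hlim : Tendsto x (𝓝[<] T₀) (𝓝 L)) :
    ∃ δ > (0:ℝ), ∃ x' : ℝ → ℝ, IsSolutionOn x' (Ico 0 (T₀ + δ)) ∧
      ∀ t ∈ Ico 0 T₀, x' t = x t := by
  obtain ⟨y, hy0, δ₀, hδ₀, hy⟩ :=
    (f2_contDiffAt hL).exists_forall_mem_closedBall_exists_eq_forall_mem_Ioo_hasDerivAt₀ T₀
  have hyT₀mem : T₀ ∈ Ioo (T₀ - δ₀) (T₀ + δ₀) := ⟨by linarith, by linarith⟩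
  have hycont : ContinuousAt y T₀ := (hy T₀ hyT₀mem).continuousAt
  have hL' : 0 < y T₀ := by rw [hy0]; exact hL
  have hpos : ∀ᶠ u in 𝓝 T₀, 0 < y u := hycont.eventually (eventually_gt_nhds hL')
  obtain ⟨δ₁, hδ₁, hball⟩ := Metric.eventually_nhds_iff_ball.mp hpos
  set δ := min δ₀ δ₁ / 2 with hδdef
  have hδ : 0 < δ := by positivity
  have hδδ₀ : δ < δ₀ := by
    have := min_le_left δ₀ δ₁; simp only [hδdef]; linarith
  have hδδ₁ : δ < δ₁ := by
    have := min_le_right δ₀ δ₁; simp only [hδdef]; linarith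
  set x' : ℝ → ℝ := fun t => if t < T₀ then x t else y t with hx'def
  have hx'T₀ : x' T₀ = L := by simp only [hx'def, lt_irrefl, if_false, hy0]
  have hx'eqx : ∀ u < T₀, x' u = x u := fun u hu => if_pos hu
  have hx'eqy : ∀ u, T₀ ≤ u → x' u = y u := fun u hu => if_neg (not_lt.mpr hu)
  -- derivative of x' on interior points below T₀
  have hderiv_lt : ∀ t, 0 ≤ t → t < T₀ → HasDerivAt x' (f2 (x t)) t := by
    intro t ht0 htT
    refine ((hsol t ⟨ht0, htT⟩).2).congr_of_eventuallyEq ?_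
    filter_upwards [Iio_mem_nhds htT] with u hu
    exact hx'eqx u hu
  -- left derivative at T₀
  have hIoo_mem : Ioo 0 T₀ ∈ 𝓝[<] T₀ := Ioo_mem_nhdsLT_of_mem ⟨hT₀, le_rfl⟩
  have hleft : HasDerivWithinAt x' (f2 L) (Iic T₀) T₀ := by
    apply hasDerivWithinAt_Iic_of_tendsto_deriv (s := Ioo 0 T₀)
    · intro u hu
      exact (hderiv_lt u hu.1.le hu.2).differentiableAt.differentiableWithinAt
    · rw [ContinuousWithinAt, hx'T₀]
      refine (hlim.mono_left (nhdsWithin_mono _ Ioo_subset_Iio_self)).congr' ?_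
      filter_upwards [self_mem_nhdsWithin] with u hu
      exact (hx'eqx u hu.2).symm
    · exact hIoo_mem
    · refine Tendsto.congr' ?_ (((f2_continuousAt hL).tendsto).comp hlim)
      filter_upwards [hIoo_mem] with u hu
      exact ((hderiv_lt u hu.1.le hu.2).deriv).symm
  -- right derivative at T₀
  have hright : HasDerivWithinAt x' (f2 L) (Ici T₀) T₀ := by
    have h := (hy T₀ hyT₀mem).hasDerivWithinAt (s := Ici T₀)
    rw [hy0] at h
    exact h.congr (fun u hu => hx'eqy u hu) (hx'eqy T₀ le_rfl)
  have hT₀deriv : HasDerivAt x' (f2 L) T₀ := by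
    have h := hleft.union hright
    rw [Iic_union_Ici] at h
    exact hasDerivWithinAt_univ.mp h
  refine ⟨δ, hδ, x', ?_, fun t ht => hx'eqx t ht.2⟩
  rintro t ⟨ht0, htlt⟩
  rcases lt_trichotomy t T₀ with h | h | h
  · refine ⟨?_, ?_⟩
    · rw [hx'eqx t h]; exact (hsol t ⟨ht0, h⟩).1
    · have := hderiv_lt t ht0 h
      rwa [← hx'eqx t h] at this
  · subst h
    refine ⟨by rw [hx'T₀]; exact hL, ?_⟩
    rw [hx'T₀]
    exact hT₀deriv
  · have hmem : t ∈ Ioo (T₀ - δ₀) (T₀ + δ₀) := ⟨by linarith, by linarith⟩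
    have hb : t ∈ Metric.ball T₀ δ₁ := by
      rw [Metric.mem_ball, Real.dist_eq, abs_lt]
      constructor <;> linarith
    refine ⟨?_, ?_⟩
    · rw [hx'eqy t h.le]; exact hball t hb
    · rw [hx'eqy t h.le]
      refine (hy t hmem).congr_of_eventuallyEq ?_
      filter_upwards [Ioi_mem_nhds h] with u hu
      exact hx'eqy u (le_of_lt hu)

end Extend

section Limits

lemma Ico_nn {T₀ : ℝ} : ∀ t ∈ Ico (0:ℝ) T₀, 0 ≤ t := fun _ ht => ht.1

lemma Ico_seg {T₀ : ℝ} : ∀ t ∈ Ico (0:ℝ) T₀, Icc 0 t ⊆ Ico 0 T₀ :=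
  fun t ht u hu => ⟨hu.1, lt_of_le_of_lt hu.2 ht.2⟩

lemma Ici_nn : ∀ t ∈ Ici (0:ℝ), 0 ≤ t := fun _ ht => ht

lemma Ici_seg : ∀ t ∈ Ici (0:ℝ), Icc 0 t ⊆ Ici 0 := fun _ _ u hu => hu.1

/-- finite-time limit, monotone case -/
lemma sol_lim_mono {x : ℝ → ℝ} {T₀ ε : ℝ} (hT₀ : 0 < T₀) (hε : 0 < ε)
    (hsol : IsSolutionOn x (Ico 0 T₀)) (hx0 : x 0 = ε) (hle : ε ≤ 1) :
    ∃ L, 0 < L ∧ Tendsto x (𝓝[<] T₀) (𝓝 L) := by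
  have h0mem : (0:ℝ) ∈ Ico (0:ℝ) T₀ := ⟨le_rfl, hT₀⟩
  have h01 : x 0 ≤ 1 := by rw [hx0]; exact hle
  set x' : ℝ → ℝ := fun t => x (max t 0) with hx'def
  have hmem : ∀ t ∈ Iio T₀, max t 0 ∈ Ico 0 T₀ := fun t ht =>
    ⟨le_max_right _ _, max_lt ht hT₀⟩
  have hmono : MonotoneOn x' (Iio T₀) := fun a ha b hb hab =>
    sol_mono Ico_nn Ico_seg hsol h01 _ (hmem a ha) _ (hmem b hb)
      (max_le_max hab le_rfl)
  have hbdd : BddAbove (x' '' Iio T₀) := by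
    refine ⟨1, ?_⟩
    rintro _ ⟨t, ht, rfl⟩
    exact sol_le_one Ico_nn Ico_seg hsol h01 _ (hmem t ht)
  refine ⟨sSup (x' '' Iio T₀), ?_, ?_⟩
  · have h0Iio : (0:ℝ) ∈ Iio T₀ := hT₀
    have : x' 0 ≤ sSup (x' '' Iio T₀) := le_csSup hbdd (mem_image_of_mem _ h0Iio)
    have hx'0 : x' 0 = ε := by simp [hx'def, hx0]
    rw [hx'0] at this
    linarith
  · refine (hmono.tendsto_nhdsLT hbdd).congr' ?_
    filter_upwards [Ioo_mem_nhdsLT_of_mem (show T₀ ∈ Ioc (0:ℝ) T₀ from ⟨hT₀, le_rfl⟩)]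
      with u hu
    simp [hx'def, max_eq_left hu.1.le]

/-- finite-time limit, antitone case -/
lemma sol_lim_anti {x : ℝ → ℝ} {T₀ ε : ℝ} (hT₀ : 0 < T₀) (hε : 0 < ε)
    (hsol : IsSolutionOn x (Ico 0 T₀)) (hx0 : x 0 = ε) (hle : 1 ≤ ε) :
    ∃ L, 0 < L ∧ Tendsto x (𝓝[<] T₀) (𝓝 L) := by
  have h01 : 1 ≤ x 0 := by rw [hx0]; exact hle
  set x' : ℝ → ℝ := fun t => x (max t 0) with hx'def
  have hmem : ∀ t ∈ Iio T₀, max t 0 ∈ Ico 0 T₀ := fun t ht =>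
    ⟨le_max_right _ _, max_lt ht hT₀⟩
  have hanti : AntitoneOn x' (Iio T₀) := fun a ha b hb hab =>
    sol_anti Ico_nn Ico_seg hsol h01 _ (hmem a ha) _ (hmem b hb)
      (max_le_max hab le_rfl)
  have hbdd : BddBelow (x' '' Iio T₀) := by
    refine ⟨1, ?_⟩
    rintro _ ⟨t, ht, rfl⟩
    exact sol_ge_one Ico_nn Ico_seg hsol h01 _ (hmem t ht)
  refine ⟨sInf (x' '' Iio T₀), ?_, ?_⟩
  · have h0Iio : (0:ℝ) ∈ Iio T₀ := hT₀
    have h1le : (1:ℝ) ≤ sInf (x' '' Iio T₀) := by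
      apply le_csInf ⟨x' 0, mem_image_of_mem _ h0Iio⟩
      rintro _ ⟨t, ht, rfl⟩
      exact sol_ge_one Ico_nn Ico_seg hsol h01 _ (hmem t ht)
    linarith
  · refine (hanti.tendsto_nhdsLT hbdd).congr' ?_
    filter_upwards [Ioo_mem_nhdsLT_of_mem (show T₀ ∈ Ioc (0:ℝ) T₀ from ⟨hT₀, le_rfl⟩)]
      with u hu
    simp [hx'def, max_eq_left hu.1.le]

end Limits

section Conv

/-- global convergence, monotone case -/
lemma sol_conv_mono {x : ℝ → ℝ} {ε : ℝ} (hε : 0 < ε)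
    (hsol : IsSolutionOn x (Ici 0)) (hx0 : x 0 = ε) (hle : ε ≤ 1) :
    Tendsto x atTop (𝓝 1) := by
  have h01 : x 0 ≤ 1 := by rw [hx0]; exact hle
  set x' : ℝ → ℝ := fun t => x (max t 0) with hx'def
  have hmem : ∀ t : ℝ, max t 0 ∈ Ici (0:ℝ) := fun t => mem_Ici.mpr (le_max_right _ _)
  have hmono : Monotone x' := fun a b hab =>
    sol_mono Ici_nn Ici_seg hsol h01 _ (hmem a) _ (hmem b) (max_le_max hab le_rfl)
  have hub1 : ∀ t : ℝ, x' t ≤ 1 := fun t => sol_le_one Ici_nn Ici_seg hsol h01 _ (hmem t)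
  have hbdd : BddAbove (range x') := ⟨1, by rintro _ ⟨t, rfl⟩; exact hub1 t⟩
  set L : ℝ := ⨆ t, x' t with hLdef
  have htend : Tendsto x' atTop (𝓝 L) := tendsto_atTop_ciSup hmono hbdd
  have hLle : L ≤ 1 := ciSup_le hub1
  have hεL : ε ≤ L := by
    have := le_ciSup hbdd (0:ℝ)
    simpa [hx'def, hx0] using this
  have hxε : ∀ t : ℝ, 0 ≤ t → ε ≤ x t := by
    intro t ht
    have := sol_mono Ici_nn Ici_seg hsol h01 0 self_mem_Ici t ht ht
    rwa [hx0] at this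
  have hxL : ∀ t : ℝ, 0 ≤ t → x t ≤ L := by
    intro t ht
    have := le_ciSup hbdd t
    simpa [hx'def, max_eq_left ht] using this
  have hL1 : L = 1 := by
    by_contra hne
    have hLlt : L < 1 := lt_of_le_of_ne hLle hne
    obtain ⟨u0, hu0mem, hu0min⟩ :=
      (isCompact_Icc (a := ε) (b := L)).exists_isMinOn (Set.nonempty_Icc.mpr hεL)
        (fun u hu => (f2_continuousAt (lt_of_lt_of_le hε hu.1)).continuousWithinAt)
    set c : ℝ := f2 u0 with hcdef
    have hc : 0 < c := f2_pos (lt_of_lt_of_le hε hu0mem.1) (lt_of_le_of_lt hu0mem.2 hLlt)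
    have hg : ∀ t ∈ Ici (0:ℝ), HasDerivAt (fun t => x t - c * t) (f2 (x t) - c) t := by
      intro t ht
      have h1 := (hsol t ht).2
      have h2 : HasDerivAt (fun t : ℝ => c * t) c t := by
        simpa using (hasDerivAt_id t).const_mul c
      exact h1.sub h2
    have hgmono : MonotoneOn (fun t => x t - c * t) (Ici 0) := by
      apply monotoneOn_of_deriv_nonneg (convex_Ici 0)
      · exact fun t ht => (hg t ht).continuousAt.continuousWithinAt
      · intro t ht
        rw [interior_Ici] at ht
        exact (hg t (mem_Ici.mpr ht.le)).differentiableAt.differentiableWithinAt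
      · intro t ht
        rw [interior_Ici] at ht
        rw [(hg t (mem_Ici.mpr ht.le)).deriv]
        have hx_mem : x t ∈ Icc ε L := ⟨hxε t ht.le, hxL t ht.le⟩
        have h3 : f2 u0 ≤ f2 (x t) := hu0min hx_mem
        simp only [hcdef]
        linarith
    have hkey := hgmono (self_mem_Ici) (mem_Ici.mpr (by positivity : (0:ℝ) ≤ 1/c))
      (by positivity)
    simp only [mul_zero, sub_zero, hx0] at hkey
    rw [mul_one_div, div_self (ne_of_gt hc)] at hkey
    have hx1c : x (1/c) ≤ 1 := le_trans (hxL _ (by positivity)) hLle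
    linarith
  rw [← hL1]
  refine htend.congr' ?_
  filter_upwards [eventually_ge_atTop (0:ℝ)] with t ht
  simp [hx'def, max_eq_left ht]

/-- global convergence, antitone case -/
lemma sol_conv_anti {x : ℝ → ℝ} {ε : ℝ} (hε : 0 < ε)
    (hsol : IsSolutionOn x (Ici 0)) (hx0 : x 0 = ε) (hle : 1 ≤ ε) :
    Tendsto x atTop (𝓝 1) := by
  have h01 : 1 ≤ x 0 := by rw [hx0]; exact hle
  set x' : ℝ → ℝ := fun t => x (max t 0) with hx'def
  have hmem : ∀ t : ℝ, max t 0 ∈ Ici (0:ℝ) := fun t => mem_Ici.mpr (le_max_right _ _)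
  have hanti : Antitone x' := fun a b hab =>
    sol_anti Ici_nn Ici_seg hsol h01 _ (hmem a) _ (hmem b) (max_le_max hab le_rfl)
  have hlb1 : ∀ t : ℝ, 1 ≤ x' t := fun t => sol_ge_one Ici_nn Ici_seg hsol h01 _ (hmem t)
  have hbdd : BddBelow (range x') := ⟨1, by rintro _ ⟨t, rfl⟩; exact hlb1 t⟩
  set L : ℝ := ⨅ t, x' t with hLdef
  have htend : Tendsto x' atTop (𝓝 L) := tendsto_atTop_ciInf hanti hbdd
  have hLge : 1 ≤ L := le_ciInf hlb1
  have hLε : L ≤ ε := by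
    have := ciInf_le hbdd (0:ℝ)
    simpa [hx'def, hx0] using this
  have hxε : ∀ t : ℝ, 0 ≤ t → x t ≤ ε := by
    intro t ht
    have := sol_anti Ici_nn Ici_seg hsol h01 0 self_mem_Ici t ht ht
    rwa [hx0] at this
  have hxL : ∀ t : ℝ, 0 ≤ t → L ≤ x t := by
    intro t ht
    have := ciInf_le hbdd t
    simpa [hx'def, max_eq_left ht] using this
  have hL1 : L = 1 := by
    by_contra hne
    have hLgt : 1 < L := lt_of_le_of_ne hLge (Ne.symm hne)
    obtain ⟨u0, hu0mem, hu0max⟩ :=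
      (isCompact_Icc (a := L) (b := ε)).exists_isMaxOn (Set.nonempty_Icc.mpr hLε)
        (fun u hu => (f2_continuousAt (lt_trans one_pos (lt_of_lt_of_le hLgt hu.1))).continuousWithinAt)
    set c : ℝ := -f2 u0 with hcdef
    have hc : 0 < c := by
      have := f2_neg (lt_of_lt_of_le hLgt hu0mem.1)
      simp only [hcdef]
      linarith
    have hg : ∀ t ∈ Ici (0:ℝ), HasDerivAt (fun t => x t + c * t) (f2 (x t) + c) t := by
      intro t ht
      have h1 := (hsol t ht).2
      have h2 : HasDerivAt (fun t : ℝ => c * t) c t := by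
        simpa using (hasDerivAt_id t).const_mul c
      exact h1.add h2
    have hganti : AntitoneOn (fun t => x t + c * t) (Ici 0) := by
      apply antitoneOn_of_deriv_nonpos (convex_Ici 0)
      · exact fun t ht => (hg t ht).continuousAt.continuousWithinAt
      · intro t ht
        rw [interior_Ici] at ht
        exact (hg t (mem_Ici.mpr ht.le)).differentiableAt.differentiableWithinAt
      · intro t ht
        rw [interior_Ici] at ht
        rw [(hg t (mem_Ici.mpr ht.le)).deriv]
        have hx_mem : x t ∈ Icc L ε := ⟨hxL t ht.le, hxε t ht.le⟩
        have h3 : f2 (x t) ≤ f2 u0 := hu0max hx_mem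
        simp only [hcdef]
        linarith
    have hkey := hganti (self_mem_Ici) (mem_Ici.mpr (by positivity : (0:ℝ) ≤ ε/c))
      (by positivity)
    simp only [mul_zero, add_zero, hx0] at hkey
    rw [mul_div_cancel₀ _ (ne_of_gt hc)] at hkey
    have hx1c : 1 ≤ x (ε/c) := sol_ge_one Ici_nn Ici_seg hsol h01 _ (mem_Ici.mpr (by positivity : (0:ℝ) ≤ ε/c))
    linarith
  rw [← hL1]
  refine htend.congr' ?_
  filter_upwards [eventually_ge_atTop (0:ℝ)] with t ht
  simp [hx'def, max_eq_left ht]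

end Conv

/-- For the scalar ODE `x' = (1/8)(2π²)^(2/3) x^(-1/3)(-3x⁴ + x² + 2)` on `(0, ∞)`:
one has `-3x⁴ + x² + 2 = (1 - x²)(3x² + 2)`, so `x ≡ 1` is the unique positive constant
solution; and every maximal solution with initial value `ε > 0` exists for all time,
stays in the closed interval between `ε` and `1`, and converges to `1`. -/
theorem scalar_ode_amu_neg_one :
    (∀ x : ℝ, -3*x^4 + x^2 + 2 = (1 - x^2) * (3*x^2 + 2)) ∧
    (∀ c : ℝ, 0 < c → (IsSolutionOn (fun _ => c) Set.univ ↔ c = 1)) ∧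
    ∀ ε : ℝ, 0 < ε → ∀ (x : ℝ → ℝ) (T : ℝ≥0∞), IsMaxSolution x T → x 0 = ε →
      T = ⊤ ∧ (∀ t : ℝ, 0 ≤ t → x t ∈ Set.uIcc ε 1) ∧ Tendsto x atTop (𝓝 1) := by
  refine ⟨fun x => by ring, ?_, ?_⟩
  · intro c hc
    constructor
    · intro h
      have h1 := (h 0 trivial).2
      have h2 : HasDerivAt (fun _ : ℝ => c) 0 0 := hasDerivAt_const 0 c
      have h0 : f2 c = 0 := h1.unique h2
      by_contra hne
      rcases lt_or_gt_of_ne hne with hlt | hgt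
      · exact absurd h0 (ne_of_gt (f2_pos hc hlt))
      · exact absurd h0 (ne_of_lt (f2_neg hgt))
    · intro h; subst h
      intro t _
      exact ⟨one_pos, by simpa [f2_one] using hasDerivAt_const t (1:ℝ)⟩
  · intro ε hε x T hmax hx0
    obtain ⟨hTpos, hsol, hnotext⟩ := hmax
    have hTtop : T = ⊤ := by
      by_contra hT
      set T₀ := T.toReal with hT₀def
      have hT₀pos : 0 < T₀ := ENNReal.toReal_pos (ne_of_gt hTpos) hT
      have hdom : domainUpTo T = Ico 0 T₀ := by
        ext t
        simp only [domainUpTo, mem_setOf_eq, mem_Ico]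
        constructor
        · rintro ⟨h1, h2⟩
          exact ⟨h1, (ENNReal.ofReal_lt_iff_lt_toReal h1 hT).mp h2⟩
        · rintro ⟨h1, h2⟩
          exact ⟨h1, (ENNReal.ofReal_lt_iff_lt_toReal h1 hT).mpr h2⟩
      rw [hdom] at hsol
      have hlim : ∃ L, 0 < L ∧ Tendsto x (𝓝[<] T₀) (𝓝 L) := by
        rcases le_total ε 1 with h | h
        · exact sol_lim_mono hT₀pos hε hsol hx0 h
        · exact sol_lim_anti hT₀pos hε hsol hx0 h
      obtain ⟨L, hL, hlim⟩ := hlim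
      obtain ⟨δ, hδ, x', hsol', hagree⟩ := sol_extend hT₀pos hsol hL hlim
      apply hnotext
      refine ⟨ENNReal.ofReal (T₀ + δ), x', ?_, ?_, ?_⟩
      · conv_lhs => rw [← ENNReal.ofReal_toReal hT]
        rw [ENNReal.ofReal_lt_ofReal_iff (by linarith)]
        linarith
      · have hdom' : domainUpTo (ENNReal.ofReal (T₀ + δ)) = Ico 0 (T₀ + δ) := by
          ext t
          simp only [domainUpTo, mem_setOf_eq, mem_Ico]
          constructor
          · rintro ⟨h1, h2⟩
            exact ⟨h1, by rwa [ENNReal.ofReal_lt_ofReal_iff (by linarith)] at h2⟩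
          · rintro ⟨h1, h2⟩
            exact ⟨h1, by rwa [ENNReal.ofReal_lt_ofReal_iff (by linarith)]⟩
        rw [hdom']
        exact hsol'
      · rw [hdom]
        exact hagree
    have hdom : domainUpTo T = Ici 0 := by
      rw [hTtop]
      ext t
      simp [domainUpTo]
    rw [hdom] at hsol
    refine ⟨hTtop, ?_, ?_⟩
    · intro t ht
      rcases le_total ε 1 with h | h
      · rw [Set.uIcc_of_le h]
        have h01 : x 0 ≤ 1 := by rw [hx0]; exact h
        refine ⟨?_, sol_le_one Ici_nn Ici_seg hsol h01 t ht⟩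
        have := sol_mono Ici_nn Ici_seg hsol h01 0 self_mem_Ici t ht ht
        rwa [hx0] at this
      · rw [Set.uIcc_of_ge h]
        have h01 : 1 ≤ x 0 := by rw [hx0]; exact h
        refine ⟨sol_ge_one Ici_nn Ici_seg hsol h01 t ht, ?_⟩
        have := sol_anti Ici_nn Ici_seg hsol h01 0 self_mem_Ici t ht ht
        rwa [hx0] at this
    · rcases le_total ε 1 with h | h
      · exact sol_conv_mono hε hsol hx0 h
      · exact sol_conv_anti hε hsol hx0 h
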